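/- Let A be an m×n real matrix, Ṽ ∈ ℝ^{n×r}, Ũ ∈ ℝ^{m×(r+ℓ)}, and suppose AṼ = Q₁R₁, (Ũ*A)* = Q₂R₂, and Ũ*AṼ = Q₃R₃ are (economic) QR factorizations with Q₁, Q₂, Q₃ orthonormal. Then the nonzero singular values of the generalized Nyström approximation A_GN = AṼ(Ũ*AṼ)†Ũ*A coincide with the nonzero singular values of the small matrix R₁R₃†Q₃*R₂*; that is, σ(Q₁R₁(Q₃R₃)†R₂*Q₂*) = σ(R₁R₃†Q₃*R₂*) up to trailing zeros. -/

import Mathlib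

open Matrix

/-- The tuple `f` sorted in nonincreasing order. -/
noncomputable def sortedDesc {α : Type*} [Fintype α] (f : α → ℝ) :
    Fin (Fintype.card α) → ℝ := fun i =>
  let g : Fin (Fintype.card α) → ℝ := f ∘ (Fintype.equivFin α).symm
  g (Tuple.sort g i.rev)

/-- Singular values of a real matrix, in nonincreasing order (generic index types). -/
noncomputable def sVals {m n : Type*} [Fintype m] [Fintype n] [DecidableEq n]
    (M : Matrix m n ℝ) : Fin (Fintype.card n) → ℝ :=
  sortedDesc fun j => Real.sqrt ((Matrix.isHermitian_conjTranspose_mul_self M).eigenvalues j)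

/-- Singular values of a real `Fin m × Fin n` matrix, in nonincreasing order,
`singularValues M 0` being the largest. -/
noncomputable def singularValues {m n : ℕ} (M : Matrix (Fin m) (Fin n) ℝ) :
    Fin n → ℝ := fun i =>
  let g : Fin n → ℝ := fun j =>
    Real.sqrt ((Matrix.isHermitian_conjTranspose_mul_self M).eigenvalues j)
  g (Tuple.sort g i.rev)

/-- The spectral (operator 2-)norm of a real matrix. -/
noncomputable def specNorm {m n : Type*} [Fintype m] [Fintype n] [DecidableEq n]
    (M : Matrix m n ℝ) : ℝ :=
  ‖LinearMap.toContinuousLinearMap (Matrix.toEuclideanLin M)‖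

/-- The Moore-Penrose pseudoinverse of a real matrix, defined via the Tikhonov
regularization limit of `(AᵀA + εI)⁻¹Aᵀ` as `ε` tends to `0` from above. -/
noncomputable def pinv {m n : Type*} [Fintype m] [Fintype n] [DecidableEq n]
    (A : Matrix m n ℝ) : Matrix n m ℝ :=
  Filter.limUnder (nhdsWithin 0 (Set.Ioi 0)) fun ε : ℝ => (Aᵀ * A + ε • 1)⁻¹ * Aᵀ

/-- A tuple of `k` reals extended to all of `ℕ` by trailing zeros. -/
def padZero {k : ℕ} (f : Fin k → ℝ) : ℕ → ℝ := fun i => if h : i < k then f ⟨i, h⟩ else 0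

lemma list_ofFn_sorted {a : ℕ} (f : Fin a → ℝ) :
    (List.ofFn (fun i : Fin a => f (Tuple.sort f i.rev))).Pairwise (· ≥ ·) := by
  rw [List.pairwise_ofFn]
  intro i j hij
  exact Tuple.monotone_sort f (by simpa [Fin.rev_le_rev] using hij.le)

lemma list_ofFn_coe {a : ℕ} (f : Fin a → ℝ) :
    ((List.ofFn (fun i : Fin a => f (Tuple.sort f i.rev))) : Multiset ℝ)
      = Finset.univ.val.map f := by
  have h : (fun i : Fin a => f (Tuple.sort f i.rev)) = f ∘ (Fin.revPerm.trans (Tuple.sort f)) := rfl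
  rw [h, List.ofFn_eq_map, ← Multiset.map_coe]
  have h2 : ((List.finRange a : List (Fin a)) : Multiset (Fin a)) = Finset.univ.val := by
    rw [Fin.univ_def]
  rw [h2, ← Multiset.map_map f, Multiset.map_univ_val_equiv]

lemma padZero_eq_getD {a : ℕ} (f : Fin a → ℝ) (i : ℕ) :
    padZero (fun i : Fin a => f (Tuple.sort f i.rev)) i
      = (List.ofFn (fun i : Fin a => f (Tuple.sort f i.rev))).getD i 0 := by
  unfold padZero
  by_cases h : i < a
  · rw [dif_pos h, List.getD_eq_getElem _ _ (by simpa using h), List.getElem_ofFn]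
  · rw [dif_neg h, List.getD_eq_default _ _ (by simpa using le_of_not_gt h)]

lemma padZero_sortDesc_eq {a b : ℕ} (f : Fin a → ℝ) (g : Fin b → ℝ)
    (hg : ∀ i, 0 ≤ g i)
    (h : (Finset.univ.val.map f : Multiset ℝ)
        = Multiset.replicate (a - b) 0 + Finset.univ.val.map g) (hba : b ≤ a) :
    ∀ i, padZero (fun i => f (Tuple.sort f i.rev)) i
        = padZero (fun i => g (Tuple.sort g i.rev)) i := by
  set Lf := List.ofFn (fun i : Fin a => f (Tuple.sort f i.rev)) with hLf
  set Lg := List.ofFn (fun i : Fin b => g (Tuple.sort g i.rev)) with hLg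
  have hgmem : ∀ x ∈ Lg, 0 ≤ x := by
    intro x hx
    rw [hLg, List.mem_ofFn] at hx
    obtain ⟨i, rfl⟩ := hx
    exact hg _
  have hsorted : (Lg ++ List.replicate (a - b) (0:ℝ)).Pairwise (· ≥ ·) := by
    rw [List.pairwise_append]
    refine ⟨list_ofFn_sorted g, ?_, ?_⟩
    · exact List.pairwise_replicate.2 (Or.inr le_rfl)
    · intro x hx y hy
      rw [List.eq_of_mem_replicate hy]
      exact hgmem x hx
  have hperm : List.Perm Lf (Lg ++ List.replicate (a - b) (0:ℝ)) := by
    rw [← Multiset.coe_eq_coe]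
    have : ((Lg ++ List.replicate (a - b) (0:ℝ) : List ℝ) : Multiset ℝ)
        = (Lg : Multiset ℝ) + Multiset.replicate (a-b) (0:ℝ) := by
      rw [← Multiset.coe_replicate]; rfl
    rw [this, hLf, hLg, list_ofFn_coe, list_ofFn_coe, h, add_comm]
  have hEq : Lf = Lg ++ List.replicate (a - b) (0:ℝ) :=
    hperm.eq_of_pairwise' (list_ofFn_sorted f) hsorted
  intro i
  rw [padZero_eq_getD, padZero_eq_getD, ← hLf, ← hLg, hEq]
  rcases lt_or_ge i Lg.length with hi | hi
  · exact List.getD_append _ _ _ _ hi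
  · have h1 : Lg.getD i 0 = 0 := List.getD_eq_default _ _ hi
    have h2 : (Lg ++ List.replicate (a-b) (0:ℝ)).getD i 0 = 0 := by
      rcases lt_or_ge i (Lg ++ List.replicate (a-b) (0:ℝ)).length with hi2 | hi2
      · rw [List.getD_eq_getElem _ _ hi2, List.getElem_append_right hi]
        simp
      · exact List.getD_eq_default _ _ hi2
    rw [h1, h2]


lemma eig_congr {k : ℕ} {A B : Matrix (Fin k) (Fin k) ℝ} (h : A = B)
    (hA : A.IsHermitian) (hB : B.IsHermitian) : hA.eigenvalues = hB.eigenvalues := by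
  subst h; rfl

-- det(x•1 - A) = ∏ (x - λ i) for real hermitian A
lemma det_smul_one_sub {k : ℕ} {A : Matrix (Fin k) (Fin k) ℝ} (hA : A.IsHermitian) (x : ℝ) :
    det (x • (1 : Matrix (Fin k) (Fin k) ℝ) - A) = ∏ i, (x - hA.eigenvalues i) := by
  set V : Matrix (Fin k) (Fin k) ℝ := ↑(hA.eigenvectorUnitary) with hV
  have hVV : Vᵀ * V = 1 := by
    rw [← Matrix.conjTranspose_eq_transpose_of_trivial]
    exact Unitary.coe_star_mul_self hA.eigenvectorUnitary
  have hVV' : V * Vᵀ = 1 := by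
    rw [← Matrix.conjTranspose_eq_transpose_of_trivial]
    exact Unitary.coe_mul_star_self hA.eigenvectorUnitary
  have hsp : A = V * diagonal hA.eigenvalues * Vᵀ := by
    have := hA.spectral_theorem
    rw [← Matrix.conjTranspose_eq_transpose_of_trivial]
    exact this.trans (by rw [Unitary.conjStarAlgAut_apply]; rfl)
  have key : x • (1 : Matrix (Fin k) (Fin k) ℝ) - A
      = V * (diagonal (fun i => x - hA.eigenvalues i)) * Vᵀ := by
    have hd : (diagonal fun i => x - hA.eigenvalues i)
        = x • (1:Matrix (Fin k) (Fin k) ℝ) - diagonal hA.eigenvalues := by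
      rw [smul_one_eq_diagonal, diagonal_sub]
    rw [hd, Matrix.mul_sub, Matrix.sub_mul, ← hsp]
    congr 1
    rw [Matrix.mul_smul, Matrix.smul_mul, Matrix.mul_one, hVV']
  rw [key, det_mul, det_mul, mul_comm, ← mul_assoc, ← det_mul, hVV, det_one, one_mul,
    det_diagonal]

open Polynomial in
lemma eig_conj_orthonormal {n k : ℕ} (hkn : k ≤ n) (Q : Matrix (Fin n) (Fin k) ℝ)
    (B : Matrix (Fin k) (Fin k) ℝ) (hQ : Qᵀ * Q = 1)
    (hB : B.IsHermitian) (hQBQ : (Q * B * Qᵀ).IsHermitian) :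
    (Finset.univ.val.map hQBQ.eigenvalues : Multiset ℝ)
      = Multiset.replicate (n - k) 0 + Finset.univ.val.map hB.eigenvalues := by
  have hdet : ∀ x : ℝ, x ≠ 0 →
      ∏ i, (x - hQBQ.eigenvalues i) = x ^ (n - k) * ∏ i, (x - hB.eigenvalues i) := by
    intro x hx
    rw [← det_smul_one_sub hQBQ, ← det_smul_one_sub hB]
    have hxx : x * (-x⁻¹) = -1 := by field_simp
    have e1 : x • (1 : Matrix (Fin n) (Fin n) ℝ) - Q*B*Qᵀ
        = x • ((1 : Matrix (Fin n) (Fin n) ℝ) + ((-x⁻¹) • (Q*B)) * Qᵀ) := by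
      rw [smul_add, Matrix.smul_mul, smul_smul, hxx, Matrix.mul_assoc]
      simp [sub_eq_add_neg]
    have e2 : x • (1 : Matrix (Fin k) (Fin k) ℝ) - B
        = x • ((1 : Matrix (Fin k) (Fin k) ℝ) + Qᵀ * ((-x⁻¹) • (Q*B))) := by
      rw [Matrix.mul_smul, ← Matrix.mul_assoc, hQ, Matrix.one_mul,
        smul_add, smul_smul, hxx]
      simp [sub_eq_add_neg]
    rw [e1, e2, det_smul, det_smul, det_one_add_mul_comm]
    simp only [Fintype.card_fin]
    rw [← mul_assoc, ← pow_add, show n - k + k = n from by omega]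
  have hpoly : ((Finset.univ.val.map hQBQ.eigenvalues).map (fun a : ℝ => X - C a)).prod
      = X ^ (n - k) * ((Finset.univ.val.map hB.eigenvalues).map (fun a : ℝ => X - C a)).prod := by
    apply Polynomial.eq_of_infinite_eval_eq
    apply Set.Infinite.mono (s := {x : ℝ | x ≠ 0})
    · intro x hx
      simp only [Set.mem_setOf_eq]
      rw [Polynomial.eval_mul, Polynomial.eval_pow, Polynomial.eval_X,
        Polynomial.eval_multiset_prod, Polynomial.eval_multiset_prod,
        Multiset.map_map, Multiset.map_map]
      simp only [Multiset.map_map]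
      rw [← Finset.prod_eq_multiset_prod, ← Finset.prod_eq_multiset_prod]
      simpa using hdet x hx
    · exact (Set.finite_singleton (0:ℝ)).infinite_compl
  have h1 : ((Finset.univ.val.map hQBQ.eigenvalues).map (fun a : ℝ => X - C a)).prod.roots
      = Finset.univ.val.map hQBQ.eigenvalues := Polynomial.roots_multiset_prod_X_sub_C _
  rw [hpoly] at h1
  rw [← h1, Polynomial.roots_mul, Polynomial.roots_pow, Polynomial.roots_X,
    Polynomial.roots_multiset_prod_X_sub_C]
  · rw [Multiset.nsmul_singleton]
  · apply mul_ne_zero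
    · exact pow_ne_zero _ Polynomial.X_ne_zero
    · apply Polynomial.Monic.ne_zero
      exact Polynomial.monic_multiset_prod_of_monic _ _ (fun a _ => Polynomial.monic_X_sub_C a)

noncomputable def pinvAux {a b : ℕ} (M : Matrix (Fin a) (Fin b) ℝ) : Matrix (Fin b) (Fin a) ℝ :=
  let hA := Matrix.isHermitian_conjTranspose_mul_self M
  let V : Matrix (Fin b) (Fin b) ℝ := ↑(hA.eigenvectorUnitary)
  V * (Matrix.diagonal (fun i => if hA.eigenvalues i = 0 then 0 else (hA.eigenvalues i)⁻¹)
    * (Vᵀ * Mᵀ))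

lemma tendsto_tikhonov {a b : ℕ} (M : Matrix (Fin a) (Fin b) ℝ) :
    Filter.Tendsto (fun ε : ℝ => (Mᵀ * M + ε • 1)⁻¹ * Mᵀ) (nhdsWithin 0 (Set.Ioi 0))
      (nhds (pinvAux M)) := by
  set hA := Matrix.isHermitian_conjTranspose_mul_self M with hhA
  set lam := hA.eigenvalues with hlam
  set V : Matrix (Fin b) (Fin b) ℝ := ↑(hA.eigenvectorUnitary) with hV
  have hVV : Vᵀ * V = 1 := by
    rw [← Matrix.conjTranspose_eq_transpose_of_trivial]
    exact Unitary.coe_star_mul_self hA.eigenvectorUnitary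
  have hVV' : V * Vᵀ = 1 := by
    rw [← Matrix.conjTranspose_eq_transpose_of_trivial]
    exact Unitary.coe_mul_star_self hA.eigenvectorUnitary
  have hsp : Mᵀ * M = V * diagonal lam * Vᵀ := by
    have := hA.spectral_theorem
    rw [← Matrix.conjTranspose_eq_transpose_of_trivial]
    exact this.trans (by rw [Unitary.conjStarAlgAut_apply]; rfl)
  have hnonneg : ∀ i, 0 ≤ lam i := fun i =>
    (Matrix.posSemidef_conjTranspose_mul_self M).eigenvalues_nonneg i
  set C : Matrix (Fin b) (Fin a) ℝ := Vᵀ * Mᵀ with hC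
  -- rows of C with lam i = 0 vanish
  have hCC : C * Cᵀ = diagonal lam := by
    have h' : C * Cᵀ = Vᵀ * (Mᵀ * M) * V := by
      simp [hC, Matrix.transpose_mul, Matrix.mul_assoc]
    rw [h', hsp]
    simp only [← Matrix.mul_assoc]
    rw [hVV, Matrix.one_mul, Matrix.mul_assoc, hVV, Matrix.mul_one]
  have hCzero : ∀ i, lam i = 0 → ∀ j, C i j = 0 := by
    intro i hi j
    have hdiag : (C * Cᵀ) i i = 0 := by rw [hCC]; simp [hi]
    rw [Matrix.mul_apply] at hdiag
    have : ∀ j' ∈ Finset.univ, (0:ℝ) ≤ C i j' * Cᵀ j' i := by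
      intro j' _
      rw [Matrix.transpose_apply]
      exact mul_self_nonneg _
    have := (Finset.sum_eq_zero_iff_of_nonneg this).1 hdiag j (Finset.mem_univ j)
    rw [Matrix.transpose_apply] at this
    exact mul_self_eq_zero.1 this
  -- the function agrees with explicit diagonalized version on Ioi 0
  have hfun : ∀ ε ∈ Set.Ioi (0:ℝ), (Mᵀ * M + ε • 1)⁻¹ * Mᵀ
      = V * (diagonal (fun i => (lam i + ε)⁻¹) * C) := by
    intro ε hε
    have hεpos : (0:ℝ) < ε := hε
    have hsum : Mᵀ * M + ε • (1 : Matrix (Fin b) (Fin b) ℝ)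
        = V * diagonal (fun i => lam i + ε) * Vᵀ := by
      have h1 : ε • (1 : Matrix (Fin b) (Fin b) ℝ) = V * (ε • (1 : Matrix (Fin b) (Fin b) ℝ)) * Vᵀ := by
        rw [Matrix.mul_smul, Matrix.mul_one, Matrix.smul_mul, hVV']
      rw [hsp, h1, ← Matrix.add_mul, ← Matrix.mul_add]
      congr 2
      rw [smul_one_eq_diagonal, diagonal_add]
    have hinv : (Mᵀ * M + ε • (1 : Matrix (Fin b) (Fin b) ℝ))⁻¹
        = V * diagonal (fun i => (lam i + ε)⁻¹) * Vᵀ := by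
      apply Matrix.inv_eq_right_inv
      have hdd : (fun i => (lam i + ε) * (lam i + ε)⁻¹) = fun _ => (1:ℝ) := by
        funext i
        exact mul_inv_cancel₀ (add_pos_of_nonneg_of_pos (hnonneg i) hεpos).ne'
      rw [hsum]
      simp only [Matrix.mul_assoc]
      rw [← Matrix.mul_assoc Vᵀ V, hVV, Matrix.one_mul,
        ← Matrix.mul_assoc (diagonal fun i => lam i + ε), diagonal_mul_diagonal, hdd,
        diagonal_one, Matrix.one_mul, hVV']
    rw [hinv, Matrix.mul_assoc, Matrix.mul_assoc]
  -- limit of the diagonal part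
  have htend : Filter.Tendsto
      (fun ε : ℝ => V * (diagonal (fun i => (lam i + ε)⁻¹) * C))
      (nhdsWithin 0 (Set.Ioi 0)) (nhds (pinvAux M)) := by
    have : pinvAux M = V * (diagonal (fun i => if lam i = 0 then 0 else (lam i)⁻¹) * C) := rfl
    rw [this]
    have hcont : Continuous fun X : Matrix (Fin b) (Fin a) ℝ => V * X :=
      continuous_const.matrix_mul continuous_id
    have hinner : Filter.Tendsto (fun ε : ℝ => diagonal (fun i => (lam i + ε)⁻¹) * C)
        (nhdsWithin 0 (Set.Ioi 0))
        (nhds (diagonal (fun i => if lam i = 0 then 0 else (lam i)⁻¹) * C)) := by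
      apply tendsto_pi_nhds.2
      intro i
      apply tendsto_pi_nhds.2
      intro j
      simp only [Matrix.diagonal_mul]
      by_cases hl : lam i = 0
      · simpa [hCzero i hl j] using (tendsto_const_nhds :
          Filter.Tendsto (fun _ : ℝ => (0:ℝ)) (nhdsWithin 0 (Set.Ioi 0)) (nhds 0))
      · simp only [if_neg hl]
        apply Filter.Tendsto.mul_const
        have h0 : Filter.Tendsto (fun ε : ℝ => lam i + ε) (nhds 0) (nhds (lam i)) := by
          simpa using (tendsto_const_nhds.add Filter.tendsto_id :
            Filter.Tendsto (fun ε : ℝ => lam i + ε) (nhds 0) (nhds (lam i + 0)))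
        exact (h0.inv₀ hl).mono_left nhdsWithin_le_nhds
    exact hcont.continuousAt.tendsto.comp hinner
  exact htend.congr' (by filter_upwards [self_mem_nhdsWithin] with ε hε using (hfun ε hε).symm)

lemma pinv_eq_pinvAux {a b : ℕ} (M : Matrix (Fin a) (Fin b) ℝ) : pinv M = pinvAux M :=
  (tendsto_tikhonov M).limUnder_eq

lemma pinv_orthonormal_mul {p q k : ℕ} (Q : Matrix (Fin p) (Fin q) ℝ)
    (M : Matrix (Fin q) (Fin k) ℝ) (hQ : Qᵀ * Q = 1) :
    pinv (Q * M) = pinv M * Qᵀ := by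
  have h1 := tendsto_tikhonov M
  have hcont : Continuous fun X : Matrix (Fin k) (Fin q) ℝ => X * Qᵀ :=
    continuous_id.matrix_mul continuous_const
  have h2 : Filter.Tendsto (fun ε : ℝ => ((Q*M)ᵀ * (Q*M) + ε • 1)⁻¹ * (Q*M)ᵀ)
      (nhdsWithin 0 (Set.Ioi 0)) (nhds (pinvAux M * Qᵀ)) := by
    have heq : (fun ε : ℝ => ((Q*M)ᵀ * (Q*M) + ε • 1)⁻¹ * (Q*M)ᵀ)
        = fun ε : ℝ => ((Mᵀ * M + ε • 1)⁻¹ * Mᵀ) * Qᵀ := by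
      funext ε
      have hMM : (Q*M)ᵀ * (Q*M) = Mᵀ * M := by
        rw [Matrix.transpose_mul, Matrix.mul_assoc, ← Matrix.mul_assoc Qᵀ, hQ, Matrix.one_mul]
      rw [hMM, Matrix.transpose_mul, ← Matrix.mul_assoc]
    rw [heq]
    exact hcont.continuousAt.tendsto.comp h1
  rw [show pinv (Q*M) = _ from h2.limUnder_eq, pinv_eq_pinvAux]


lemma singularValues_left_mul {a b c : ℕ} (Q : Matrix (Fin a) (Fin b) ℝ)
    (M : Matrix (Fin b) (Fin c) ℝ) (hQ : Qᵀ * Q = 1) :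
    singularValues (Q * M) = singularValues M := by
  have hMM : (Q * M)ᵀ * (Q * M) = Mᵀ * M := by
    rw [Matrix.transpose_mul, Matrix.mul_assoc, ← Matrix.mul_assoc Qᵀ, hQ, Matrix.one_mul]
  have he : (Matrix.isHermitian_conjTranspose_mul_self (Q * M)).eigenvalues
      = (Matrix.isHermitian_conjTranspose_mul_self M).eigenvalues := eig_congr hMM _ _
  unfold singularValues
  simp only [he]

/-- The identity underlying Algorithm 6.1: given economic QR factorizations
`AṼ = Q₁R₁`, `(Ũ*A)* = Q₂R₂` and `Ũ*AṼ = Q₃R₃`, the (nonzero) singular values of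
the generalized Nyström approximation `A_GN = AṼ(Ũ*AṼ)†Ũ*A = Q₁R₁(Q₃R₃)†R₂*Q₂*`
coincide, up to trailing zeros, with those of the small matrix `R₁R₃†Q₃*R₂*`. -/
theorem generalized_nystrom_small_matrix_singular_values
    (m n r ℓ : ℕ)
    (A : Matrix (Fin m) (Fin n) ℝ)
    (tV : Matrix (Fin n) (Fin r) ℝ) (tU : Matrix (Fin m) (Fin (r + ℓ)) ℝ)
    (Q₁ : Matrix (Fin m) (Fin r) ℝ) (R₁ : Matrix (Fin r) (Fin r) ℝ)
    (Q₂ : Matrix (Fin n) (Fin (r + ℓ)) ℝ) (R₂ : Matrix (Fin (r + ℓ)) (Fin (r + ℓ)) ℝ)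
    (Q₃ : Matrix (Fin (r + ℓ)) (Fin r) ℝ) (R₃ : Matrix (Fin r) (Fin r) ℝ)
    (hQR₁ : A * tV = Q₁ * R₁)
    (hQR₂ : (tUᵀ * A)ᵀ = Q₂ * R₂)
    (hQR₃ : tUᵀ * A * tV = Q₃ * R₃)
    (hQ₁ : Q₁ᵀ * Q₁ = 1) (hQ₂ : Q₂ᵀ * Q₂ = 1) (hQ₃ : Q₃ᵀ * Q₃ = 1)
    (hR₁ : ∀ i j : Fin r, (j : ℕ) < (i : ℕ) → R₁ i j = 0)
    (hR₂ : ∀ i j : Fin (r + ℓ), (j : ℕ) < (i : ℕ) → R₂ i j = 0)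
    (hR₃ : ∀ i j : Fin r, (j : ℕ) < (i : ℕ) → R₃ i j = 0) :
    (∀ i : ℕ,
      padZero (singularValues (A * tV * pinv (tUᵀ * A * tV) * (tUᵀ * A))) i =
        padZero (singularValues (R₁ * pinv R₃ * Q₃ᵀ * R₂ᵀ)) i) ∧
    (∀ i : ℕ,
      padZero (singularValues (Q₁ * R₁ * pinv (Q₃ * R₃) * R₂ᵀ * Q₂ᵀ)) i =
        padZero (singularValues (R₁ * pinv R₃ * Q₃ᵀ * R₂ᵀ)) i) := by
  
  -- tUᵀ * A = R₂ᵀ * Q₂ᵀ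
  have htu : tUᵀ * A = R₂ᵀ * Q₂ᵀ := by
    have h := congrArg Matrix.transpose hQR₂
    rwa [Matrix.transpose_transpose, Matrix.transpose_mul] at h
  have hp3 : pinv (Q₃ * R₃) = pinv R₃ * Q₃ᵀ := pinv_orthonormal_mul _ _ hQ₃
  set S : Matrix (Fin r) (Fin (r + ℓ)) ℝ := R₁ * pinv R₃ * Q₃ᵀ * R₂ᵀ with hS
  have hM1 : A * tV * pinv (tUᵀ * A * tV) * (tUᵀ * A) = Q₁ * (S * Q₂ᵀ) := by
    rw [hQR₁, hQR₃, hp3, htu, hS]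
    simp only [Matrix.mul_assoc]
  have hM2 : Q₁ * R₁ * pinv (Q₃ * R₃) * R₂ᵀ * Q₂ᵀ = Q₁ * (S * Q₂ᵀ) := by
    rw [hp3, hS]
    simp only [Matrix.mul_assoc]
  have hcard : r + ℓ ≤ n := by
    have h1 : (Q₂ᵀ * Q₂).rank = r + ℓ := by
      rw [hQ₂, Matrix.rank_one, Fintype.card_fin]
    calc r + ℓ = (Q₂ᵀ * Q₂).rank := h1.symm
      _ ≤ Q₂.rank := Matrix.rank_mul_le_right _ _
      _ ≤ Fintype.card (Fin n) := Matrix.rank_le_card_height _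
      _ = n := Fintype.card_fin n
  have key : ∀ i : ℕ, padZero (singularValues (Q₁ * (S * Q₂ᵀ))) i = padZero (singularValues S) i := by
    have hleft : singularValues (Q₁ * (S * Q₂ᵀ)) = singularValues (S * Q₂ᵀ) :=
      singularValues_left_mul Q₁ (S * Q₂ᵀ) hQ₁
    rw [hleft]
    have hmat : (S * Q₂ᵀ)ᵀ * (S * Q₂ᵀ) = Q₂ * (Sᵀ * S) * Q₂ᵀ := by
      rw [Matrix.transpose_mul, Matrix.transpose_transpose]
      simp only [Matrix.mul_assoc]
    have hQBQ : (Q₂ * (Sᵀ * S) * Q₂ᵀ).IsHermitian :=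
      hmat ▸ Matrix.isHermitian_conjTranspose_mul_self (S * Q₂ᵀ)
    have hms := eig_conj_orthonormal hcard Q₂ (Sᵀ * S) hQ₂
      (Matrix.isHermitian_conjTranspose_mul_self S) hQBQ
    have he : (Matrix.isHermitian_conjTranspose_mul_self (S * Q₂ᵀ)).eigenvalues = hQBQ.eigenvalues :=
      eig_congr hmat _ hQBQ
    have hfinal : (Finset.univ.val.map (fun j =>
          Real.sqrt ((Matrix.isHermitian_conjTranspose_mul_self (S * Q₂ᵀ)).eigenvalues j)) : Multiset ℝ)
        = Multiset.replicate (n - (r + ℓ)) 0 + Finset.univ.val.map (fun j =>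
          Real.sqrt ((Matrix.isHermitian_conjTranspose_mul_self S).eigenvalues j)) := by
      have e1 : (Finset.univ.val.map (fun j =>
            Real.sqrt ((Matrix.isHermitian_conjTranspose_mul_self (S * Q₂ᵀ)).eigenvalues j)) : Multiset ℝ)
          = (Finset.univ.val.map (Matrix.isHermitian_conjTranspose_mul_self (S * Q₂ᵀ)).eigenvalues).map
              Real.sqrt := by rw [Multiset.map_map]; rfl
      have e2 : (Finset.univ.val.map (fun j =>
            Real.sqrt ((Matrix.isHermitian_conjTranspose_mul_self S).eigenvalues j)) : Multiset ℝ)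
          = (Finset.univ.val.map (Matrix.isHermitian_conjTranspose_mul_self S).eigenvalues).map
              Real.sqrt := by rw [Multiset.map_map]; rfl
      rw [e1, e2, he, hms, Multiset.map_add, Multiset.map_replicate, Real.sqrt_zero]
      rfl
    intro i
    exact padZero_sortDesc_eq _ _ (fun j => Real.sqrt_nonneg _) hfinal hcard i
  constructor
  · intro i
    rw [hM1]
    exact key i
  · intro i
    rw [hM2]
    exact key i
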